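/- The function C₁(x, y) = min{x, y, f₁(x, y)} is a copula with curvilinear section Γ, i.e., C₁ is a copula and C₁(t, φ(t)) = Γ(t) for all t ∈ [0,1]. -/

import Mathlib

open Set MeasureTheory

/-- `Γ̂(t) = t - Γ(t)`. -/
def Ghat (Γ : ℝ → ℝ) : ℝ → ℝ := fun t => t - Γ t

/-- `Γ̃(t) = φ(t) - Γ(t)`. -/
def Gtil (φ Γ : ℝ → ℝ) : ℝ → ℝ := fun t => φ t - Γ t

/-- The (signed) total variation `V_a^b(f)` of `f` on `[a, b] ⊆ [0, 1]`, with
the conventions `V_b^a(f) = -V_a^b(f)` and `V_a^a(f) = 0`. -/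
noncomputable def sV (f : ℝ → ℝ) (a b : ℝ) : ℝ := variationOnFromTo f (Set.Icc 0 1) a b

/-- `f₁(x, y) = x - (1/2) (V_{φ⁻¹(y)}^x(Γ̂) + Γ̂(x) + Γ̂(φ⁻¹(y)))`, where `ψ = φ⁻¹`. -/
noncomputable def f1 (ψ Γ : ℝ → ℝ) (x y : ℝ) : ℝ :=
  x - (1/2) * (sV (Ghat Γ) (ψ y) x + Ghat Γ x + Ghat Γ (ψ y))

/-- `f₂(x, y) = y - (1/2) (V_x^{φ⁻¹(y)}(Γ̃) + Γ̃(x) + Γ̃(φ⁻¹(y)))`, where `ψ = φ⁻¹`. -/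
noncomputable def f2 (φ ψ Γ : ℝ → ℝ) (x y : ℝ) : ℝ :=
  y - (1/2) * (sV (Gtil φ Γ) x (ψ y) + Gtil φ Γ x + Gtil φ Γ (ψ y))

/-- `C₁(x, y) = min {x, y, f₁(x, y)}`. -/
noncomputable def C1 (ψ Γ : ℝ → ℝ) (x y : ℝ) : ℝ := min x (min y (f1 ψ Γ x y))

/-- `C₂(x, y) = min {x, y, f₂(x, y)}`. -/
noncomputable def C2 (φ ψ Γ : ℝ → ℝ) (x y : ℝ) : ℝ := min x (min y (f2 φ ψ Γ x y))

/-- The φ-splice `C₂ ▵_φ C₁`: equal to `C₁` when `y ≤ φ(x)`, to `C₂` when `y ≥ φ(x)`. -/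
noncomputable def splice (φ ψ Γ : ℝ → ℝ) (x y : ℝ) : ℝ :=
  if y ≤ φ x then C1 ψ Γ x y else C2 φ ψ Γ x y

/-- A copula on `[0,1]²`: boundary conditions and 2-increasingness. -/
def IsCopula (C : ℝ → ℝ → ℝ) : Prop :=
  (∀ x ∈ Set.Icc (0:ℝ) 1, ∀ y ∈ Set.Icc (0:ℝ) 1, C x y ∈ Set.Icc (0:ℝ) 1) ∧
  (∀ x ∈ Set.Icc (0:ℝ) 1, C x 0 = 0 ∧ C 0 x = 0 ∧ C x 1 = x ∧ C 1 x = x) ∧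
  (∀ x₁ x₂ y₁ y₂ : ℝ, x₁ ∈ Set.Icc (0:ℝ) 1 → x₂ ∈ Set.Icc (0:ℝ) 1 →
    y₁ ∈ Set.Icc (0:ℝ) 1 → y₂ ∈ Set.Icc (0:ℝ) 1 → x₁ ≤ x₂ → y₁ ≤ y₂ →
    0 ≤ C x₂ y₂ - C x₂ y₁ - C x₁ y₂ + C x₁ y₁)

/-- The greatest quasi-copula `A_Γ` with curvilinear section `Γ` (`ψ = φ⁻¹`). -/
noncomputable def AG (φ ψ Γ : ℝ → ℝ) (x y : ℝ) : ℝ :=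
  if y ≤ φ x then min y (x - sSup (Ghat Γ '' Set.Icc (ψ y) x))
  else min x (y - sSup (Gtil φ Γ '' Set.Icc x (ψ y)))


lemma evar_sub_le (f g : ℝ → ℝ) (s : Set ℝ) :
    eVariationOn (fun t => f t - g t) s ≤ eVariationOn f s + eVariationOn g s := by
  apply iSup_le _
  rintro ⟨n, ⟨u, hu, us⟩⟩
  calc (∑ i ∈ Finset.range n,
        edist ((fun t => f t - g t) (u (i + 1))) ((fun t => f t - g t) (u i)))
      ≤ ∑ i ∈ Finset.range n,
        (edist (f (u (i + 1))) (f (u i)) + edist (g (u (i + 1))) (g (u i))) := by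
        refine Finset.sum_le_sum fun i _ => ?_
        simp only [edist_dist]
        rw [← ENNReal.ofReal_add dist_nonneg dist_nonneg]
        exact ENNReal.ofReal_le_ofReal (dist_sub_sub_le _ _ _ _)
    _ = (∑ i ∈ Finset.range n, edist (f (u (i + 1))) (f (u i)))
        + ∑ i ∈ Finset.range n, edist (g (u (i + 1))) (g (u i)) := Finset.sum_add_distrib
    _ ≤ eVariationOn f s + eVariationOn g s :=
        add_le_add (eVariationOn.sum_le (f := f) (n := n) hu us) (eVariationOn.sum_le (f := g) (n := n) hu us)

lemma min3_supermod {x₁ x₂ y₁ y₂ p₁ p₂ q₁ q₂ : ℝ}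
    (hp : p₁ ≤ p₂) (hpl : p₂ - p₁ ≤ x₂ - x₁)
    (hq : q₁ ≤ q₂) (hql : q₂ - q₁ ≤ y₂ - y₁) :
    min x₁ (min y₂ (p₁ + q₂)) + min x₂ (min y₁ (p₂ + q₁)) ≤
      min x₁ (min y₁ (p₁ + q₁)) + min x₂ (min y₂ (p₂ + q₂)) := by
  simp only [min_def]
  split_ifs <;> linarith

theorem stmt_8
    (φ Γ : ℝ → ℝ)
    (hφcont : ContinuousOn φ (Set.Icc 0 1))
    (hφmono : StrictMonoOn φ (Set.Icc 0 1))
    (hφ0 : φ 0 = 0) (hφ1 : φ 1 = 1)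
    (hΓrange : ∀ t ∈ Set.Icc (0:ℝ) 1, max 0 (t + φ t - 1) ≤ Γ t ∧ Γ t ≤ min t (φ t))
    (hΓlip : ∀ t₁ t₂ : ℝ, t₁ ∈ Set.Icc (0:ℝ) 1 → t₂ ∈ Set.Icc (0:ℝ) 1 → t₁ ≤ t₂ →
      0 ≤ Γ t₂ - Γ t₁ ∧ Γ t₂ - Γ t₁ ≤ (t₂ - t₁) + (φ t₂ - φ t₁))
    (ψ : ℝ → ℝ)
    (hψmem : ∀ y ∈ Set.Icc (0:ℝ) 1, ψ y ∈ Set.Icc (0:ℝ) 1)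
    (hψφ : ∀ t ∈ Set.Icc (0:ℝ) 1, ψ (φ t) = t)
    (hφψ : ∀ y ∈ Set.Icc (0:ℝ) 1, φ (ψ y) = y) :
    IsCopula (C1 ψ Γ) ∧ ∀ t ∈ Set.Icc (0:ℝ) 1, C1 ψ Γ t (φ t) = Γ t := by
  have h0m : (0:ℝ) ∈ Icc (0:ℝ) 1 := ⟨le_refl 0, zero_le_one⟩
  have h1m : (1:ℝ) ∈ Icc (0:ℝ) 1 := ⟨zero_le_one, le_refl 1⟩
  have hΓ0 : Γ 0 = 0 := by
    have h := hΓrange 0 h0m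
    rw [hφ0] at h
    have h1 := h.1; have h2 := h.2
    simp only [le_max_iff, min_self] at *
    have : (0:ℝ) ≤ Γ 0 := le_trans (le_max_left 0 (0 + 0 - 1)) h1
    linarith [min_le_left (0:ℝ) 0]
  have hΓ1 : Γ 1 = 1 := by
    have h := hΓrange 1 h1m
    rw [hφ1] at h
    have hub : Γ 1 ≤ 1 := le_trans h.2 (min_le_left _ _)
    have hlb : (1:ℝ) ≤ Γ 1 := le_trans (by norm_num : (1:ℝ) ≤ max 0 (1 + 1 - 1)) h.1
    linarith
  have hψ0 : ψ 0 = 0 := by have := hψφ 0 h0m; rwa [hφ0] at this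
  have hψ1 : ψ 1 = 1 := by have := hψφ 1 h1m; rwa [hφ1] at this
  have hG0 : Ghat Γ 0 = 0 := by simp [Ghat, hΓ0]
  have hG1 : Ghat Γ 1 = 0 := by simp [Ghat, hΓ1]
  have hGnn : ∀ t ∈ Icc (0:ℝ) 1, 0 ≤ Ghat Γ t := by
    intro t ht
    have := (hΓrange t ht).2
    have : Γ t ≤ t := le_trans this (min_le_left _ _)
    simp only [Ghat]; linarith
  have hΓmono : MonotoneOn Γ (Icc (0:ℝ) 1) := by
    intro a ha b hb hab
    have := (hΓlip a b ha hb hab).1; linarith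
  have hidmono : MonotoneOn (fun t : ℝ => t) (Icc (0:ℝ) 1) := fun a _ b _ hab => hab
  have hφm : MonotoneOn φ (Icc (0:ℝ) 1) := hφmono.monotoneOn
  have hm2 : MonotoneOn (fun t : ℝ => t + φ t - Γ t) (Icc (0:ℝ) 1) := by
    intro a ha b hb hab
    have h1 := (hΓlip a b ha hb hab).2
    have h2 := hφm ha hb hab
    simp only; linarith
  have hGid : (fun t : ℝ => (fun t : ℝ => t) t - Γ t) = Ghat Γ := by
    funext t; simp [Ghat]
  have hGm2 : (fun t : ℝ => (fun t : ℝ => t + φ t - Γ t) t - φ t) = Ghat Γ := by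
    funext t; simp only [Ghat]; ring
  have hLBV : LocallyBoundedVariationOn (Ghat Γ) (Icc (0:ℝ) 1) := by
    intro a b ha hb
    have h1 := evar_sub_le (fun t : ℝ => t) Γ (Icc (0:ℝ) 1 ∩ Icc a b)
    rw [hGid] at h1
    refine ne_top_of_le_ne_top ?_ h1
    exact ENNReal.add_ne_top.2 ⟨hidmono.locallyBoundedVariationOn a b ha hb,
      hΓmono.locallyBoundedVariationOn a b ha hb⟩
  have hψmono : ∀ y₁ ∈ Icc (0:ℝ) 1, ∀ y₂ ∈ Icc (0:ℝ) 1, y₁ ≤ y₂ → ψ y₁ ≤ ψ y₂ := by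
    intro y₁ h1 y₂ h2 h
    by_contra hc
    push_neg at hc
    have := hφmono (hψmem y₂ h2) (hψmem y₁ h1) hc
    rw [hφψ y₁ h1, hφψ y₂ h2] at this
    linarith
  -- key variation estimates
  have key : ∀ a ∈ Icc (0:ℝ) 1, ∀ b ∈ Icc (0:ℝ) 1, a ≤ b →
      sV (Ghat Γ) a b + (Ghat Γ b - Ghat Γ a) ≤ 2*(b - a) ∧
      sV (Ghat Γ) a b - (Ghat Γ b - Ghat Γ a) ≤ 2*(φ b - φ a) ∧
      |Ghat Γ b - Ghat Γ a| ≤ sV (Ghat Γ) a b := by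
    intro a ha b hb hab
    have hfin : eVariationOn (Ghat Γ) (Icc (0:ℝ) 1 ∩ Icc a b) ≠ ⊤ := hLBV a b ha hb
    have hsv : sV (Ghat Γ) a b = (eVariationOn (Ghat Γ) (Icc (0:ℝ) 1 ∩ Icc a b)).toReal :=
      variationOnFromTo.eq_of_le _ _ hab
    have hΓab : Γ a ≤ Γ b := hΓmono ha hb hab
    have hφab : φ a ≤ φ b := hφm ha hb hab
    refine ⟨?_, ?_, ?_⟩
    · -- key1
      have h1 := evar_sub_le (fun t : ℝ => t) Γ (Icc (0:ℝ) 1 ∩ Icc a b)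
      rw [hGid] at h1
      have h2 : eVariationOn (fun t : ℝ => t) (Icc (0:ℝ) 1 ∩ Icc a b) ≤
          ENNReal.ofReal (b - a) := hidmono.eVariationOn_le ha hb
      have h3 : eVariationOn Γ (Icc (0:ℝ) 1 ∩ Icc a b) ≤ ENNReal.ofReal (Γ b - Γ a) :=
        hΓmono.eVariationOn_le ha hb
      have h4 : eVariationOn (Ghat Γ) (Icc (0:ℝ) 1 ∩ Icc a b) ≤
          ENNReal.ofReal ((b - a) + (Γ b - Γ a)) := by
        rw [ENNReal.ofReal_add (by linarith) (by linarith)]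
        exact le_trans h1 (add_le_add h2 h3)
      have h5 : sV (Ghat Γ) a b ≤ (b - a) + (Γ b - Γ a) := by
        rw [hsv]; exact ENNReal.toReal_le_of_le_ofReal (by linarith) h4
      simp only [Ghat]; linarith
    · -- key2
      have h1 := evar_sub_le (fun t : ℝ => t + φ t - Γ t) φ (Icc (0:ℝ) 1 ∩ Icc a b)
      rw [hGm2] at h1
      have h2 : eVariationOn (fun t : ℝ => t + φ t - Γ t) (Icc (0:ℝ) 1 ∩ Icc a b) ≤
          ENNReal.ofReal ((b + φ b - Γ b) - (a + φ a - Γ a)) := hm2.eVariationOn_le ha hb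
      have h3 : eVariationOn φ (Icc (0:ℝ) 1 ∩ Icc a b) ≤ ENNReal.ofReal (φ b - φ a) :=
        hφm.eVariationOn_le ha hb
      have hlip := (hΓlip a b ha hb hab).2
      have h4 : eVariationOn (Ghat Γ) (Icc (0:ℝ) 1 ∩ Icc a b) ≤
          ENNReal.ofReal (((b + φ b - Γ b) - (a + φ a - Γ a)) + (φ b - φ a)) := by
        rw [ENNReal.ofReal_add (by linarith) (by linarith)]
        exact le_trans h1 (add_le_add h2 h3)
      have h5 : sV (Ghat Γ) a b ≤ ((b + φ b - Γ b) - (a + φ a - Γ a)) + (φ b - φ a) := by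
        rw [hsv]; exact ENNReal.toReal_le_of_le_ofReal (by linarith) h4
      simp only [Ghat]; linarith
    · -- key3
      have h1 : edist (Ghat Γ a) (Ghat Γ b) ≤ eVariationOn (Ghat Γ) (Icc (0:ℝ) 1 ∩ Icc a b) :=
        eVariationOn.edist_le (Ghat Γ) ⟨ha, le_refl a, hab⟩ ⟨hb, hab, le_refl b⟩
      have h2 := ENNReal.toReal_mono hfin h1
      rw [edist_dist, ENNReal.toReal_ofReal dist_nonneg, Real.dist_eq] at h2
      rw [hsv, abs_sub_comm]
      exact h2
  -- additivity
  have hadd : ∀ a ∈ Icc (0:ℝ) 1, ∀ b ∈ Icc (0:ℝ) 1,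
      sV (Ghat Γ) a b = sV (Ghat Γ) 0 b - sV (Ghat Γ) 0 a := by
    intro a ha b hb
    have := variationOnFromTo.add hLBV h0m ha hb
    show variationOnFromTo (Ghat Γ) (Icc (0:ℝ) 1) a b = _
    unfold sV
    linarith
  set u : ℝ → ℝ := fun x => x - (1/2) * (sV (Ghat Γ) 0 x + Ghat Γ x) with hu_def
  set v : ℝ → ℝ := fun y => (1/2) * (sV (Ghat Γ) 0 (ψ y) - Ghat Γ (ψ y)) with hv_def
  have hf1 : ∀ x ∈ Icc (0:ℝ) 1, ∀ y ∈ Icc (0:ℝ) 1, f1 ψ Γ x y = u x + v y := by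
    intro x hx y hy
    have h := hadd (ψ y) (hψmem y hy) x hx
    simp only [f1, hu_def, hv_def]
    rw [h]; ring
  have hsV00 : sV (Ghat Γ) 0 0 = 0 := variationOnFromTo.self _ _ 0
  have hu0 : u 0 = 0 := by simp [hu_def, hsV00, hG0]
  have hv0 : v 0 = 0 := by simp [hv_def, hψ0, hsV00, hG0]
  have humono : ∀ a ∈ Icc (0:ℝ) 1, ∀ b ∈ Icc (0:ℝ) 1, a ≤ b →
      u a ≤ u b ∧ u b - u a ≤ b - a := by
    intro a ha b hb hab
    obtain ⟨k1, _, k3⟩ := key a ha b hb hab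
    have h := hadd a ha b hb
    have habs := abs_le.1 k3
    constructor <;> simp only [hu_def] <;> linarith
  have hvmono : ∀ a ∈ Icc (0:ℝ) 1, ∀ b ∈ Icc (0:ℝ) 1, a ≤ b →
      v a ≤ v b ∧ v b - v a ≤ b - a := by
    intro a ha b hb hab
    have hpa := hψmem a ha
    have hpb := hψmem b hb
    have hpab := hψmono a ha b hb hab
    obtain ⟨_, k2, k3⟩ := key (ψ a) hpa (ψ b) hpb hpab
    have h := hadd (ψ a) hpa (ψ b) hpb
    have habs := abs_le.1 k3
    rw [hφψ a ha, hφψ b hb] at k2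
    constructor <;> simp only [hv_def] <;> linarith
  have hunn : ∀ x ∈ Icc (0:ℝ) 1, 0 ≤ u x := by
    intro x hx
    have := (humono 0 h0m x hx hx.1).1
    rwa [hu0] at this
  have hvnn : ∀ y ∈ Icc (0:ℝ) 1, 0 ≤ v y := by
    intro y hy
    have := (hvmono 0 h0m y hy hy.1).1
    rwa [hv0] at this
  have hux1 : ∀ x ∈ Icc (0:ℝ) 1, x ≤ u x + v 1 := by
    intro x hx
    obtain ⟨_, _, k3⟩ := key x hx 1 h1m hx.2
    have h := hadd x hx 1 h1m
    have habs := abs_le.1 k3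
    have hGx := hGnn x hx
    rw [hG1] at habs
    simp only [hu_def, hv_def, hψ1, hG1]
    linarith
  have hu1y : ∀ y ∈ Icc (0:ℝ) 1, y ≤ u 1 + v y := by
    intro y hy
    have hpy := hψmem y hy
    obtain ⟨_, k2, _⟩ := key (ψ y) hpy 1 h1m hpy.2
    have h := hadd (ψ y) hpy 1 h1m
    rw [hG1, hφ1, hφψ y hy] at k2
    simp only [hu_def, hv_def, hG1]
    linarith
  have hC1 : ∀ x ∈ Icc (0:ℝ) 1, ∀ y ∈ Icc (0:ℝ) 1,
      C1 ψ Γ x y = min x (min y (u x + v y)) := by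
    intro x hx y hy
    rw [C1, hf1 x hx y hy]
  refine ⟨⟨?_, ?_, ?_⟩, ?_⟩
  · -- range
    intro x hx y hy
    rw [hC1 x hx y hy]
    constructor
    · exact le_min hx.1 (le_min hy.1 (add_nonneg (hunn x hx) (hvnn y hy)))
    · exact le_trans (min_le_left _ _) hx.2
  · -- boundary
    intro x hx
    refine ⟨?_, ?_, ?_, ?_⟩
    · rw [hC1 x hx 0 h0m, hv0]
      rw [show (0:ℝ) ⊓ (u x + 0) = 0 from min_eq_left (by linarith [hunn x hx])]
      exact min_eq_right hx.1
    · rw [hC1 0 h0m x hx, hu0]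
      exact min_eq_left (le_min hx.1 (by linarith [hvnn x hx]))
    · rw [hC1 x hx 1 h1m]
      exact min_eq_left (le_min hx.2 (hux1 x hx))
    · rw [hC1 1 h1m x hx]
      rw [show x ⊓ (u 1 + v x) = x from min_eq_left (hu1y x hx)]
      exact min_eq_right hx.2
  · -- 2-increasing
    intro x₁ x₂ y₁ y₂ hx1 hx2 hy1 hy2 hx hy
    rw [hC1 x₁ hx1 y₁ hy1, hC1 x₂ hx2 y₁ hy1, hC1 x₁ hx1 y₂ hy2, hC1 x₂ hx2 y₂ hy2]
    obtain ⟨hu1, hu2⟩ := humono x₁ hx1 x₂ hx2 hx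
    obtain ⟨hv1, hv2⟩ := hvmono y₁ hy1 y₂ hy2 hy
    have := min3_supermod (x₁ := x₁) (x₂ := x₂) (y₁ := y₁) (y₂ := y₂) hu1 hu2 hv1 hv2
    linarith
  · -- section
    intro t ht
    have hφt : φ t ∈ Icc (0:ℝ) 1 := by
      constructor
      · rw [← hφ0]; exact hφm h0m ht ht.1
      · rw [← hφ1]; exact hφm ht h1m ht.2
    have hr := hΓrange t ht
    have hΓt1 : Γ t ≤ t := le_trans hr.2 (min_le_left _ _)
    have hΓt2 : Γ t ≤ φ t := le_trans hr.2 (min_le_right _ _)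
    have : f1 ψ Γ t (φ t) = Γ t := by
      simp only [f1, hψφ t ht, variationOnFromTo.self, Ghat]
      show t - 1/2 * (sV (Ghat Γ) t t + (t - Γ t) + (t - Γ t)) = Γ t
      rw [show sV (Ghat Γ) t t = 0 from variationOnFromTo.self _ _ t]
      ring
    rw [C1, this, min_eq_right hΓt2, min_eq_right hΓt1]
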